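/- Let ε₀ > 0 and let γ : [0, ε₀] → ℝⁿ be a real-analytic curve. Suppose there exist integers 1 ≤ k₁ < k₂ < … < kₙ such that the n × n matrix whose (i, j) entry is the k_j-th derivative of γ_i at 0 has nonzero determinant. Then the set of ε ∈ [0, ε₀] for which the real numbers 1, γ₁(ε), …, γₙ(ε) are linearly independent over ℚ is dense in [0, ε₀]. -/

import Mathlib

open Set Filter Topology Matrix

/-- The zero set (inside a preconnected set `s`) of a function analytic on a neighborhood of `s`
which is not identically zero on `s` is countable. -/
private lemma countable_zeros {f : ℝ → ℝ} {s : Set ℝ}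
    (hf : AnalyticOnNhd ℝ f s) (hs : IsPreconnected s) (hne : ¬ Set.EqOn f 0 s) :
    {x | x ∈ s ∧ f x = 0}.Countable := by
  have hdisc : DiscreteTopology {x | x ∈ s ∧ f x = 0} := by
    rw [discreteTopology_subtype_iff]
    intro x hx
    by_contra hbot
    have hnb : (𝓝[≠] x ⊓ 𝓟 {x | x ∈ s ∧ f x = 0}).NeBot := ⟨hbot⟩
    have hfreq : ∃ᶠ z in 𝓝[≠] x, f z = 0 :=
      (Filter.frequently_mem_iff_neBot.2 hnb).mono fun z hz => hz.2
    exact hne (hf.eqOn_zero_of_preconnected_of_frequently_eq_zero hs hx.1 hfreq)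
  have : Countable {x | x ∈ s ∧ f x = 0} :=
    TopologicalSpace.separableSpace_iff_countable.mp inferInstance
  exact Set.countable_coe_iff.mp this

private lemma iteratedDerivWithin_fun_sum' {ι : Type*} (t : Finset ι) (f : ι → ℝ → ℝ)
    {s : Set ℝ} {x : ℝ} (hx : x ∈ s) (hs : UniqueDiffOn ℝ s) {m : ℕ}
    (hf : ∀ i, ContDiffOn ℝ m (f i) s) :
    iteratedDerivWithin m (fun z => ∑ i ∈ t, f i z) s x
      = ∑ i ∈ t, iteratedDerivWithin m (f i) s x := by
  classical
  induction t using Finset.induction_on with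
  | empty =>
      simp only [Finset.sum_empty]
      rw [iteratedDerivWithin_eq_iteratedFDerivWithin, iteratedFDerivWithin_zero_fun]
      simp
  | insert a t' ha ih =>
      have h2 : ContDiffOn ℝ m (fun z => ∑ i ∈ t', f i z) s :=
        ContDiffOn.sum fun i _ => hf i
      have he : (fun z => ∑ i ∈ insert a t', f i z)
          = (f a + fun z => ∑ i ∈ t', f i z) := by
        funext z; simp [Finset.sum_insert ha]
      rw [he, iteratedDerivWithin_add hx hs (hf a x hx) (h2 x hx), ih, Finset.sum_insert ha]

private lemma iteratedDerivWithin_of_isOpen' {f : ℝ → ℝ} {s : Set ℝ} {x : ℝ} (m : ℕ)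
    (hs : IsOpen s) (hx : x ∈ s) :
    iteratedDerivWithin m f s x = iteratedDeriv m f x := by
  rw [iteratedDerivWithin_eq_iteratedFDerivWithin, iteratedDeriv_eq_iteratedFDeriv,
    iteratedFDerivWithin_of_isOpen m hs hx]

/-- If `γ : [0, ε₀] → ℝⁿ` is real-analytic and some Wronskian-type determinant of
iterated derivatives at `0` (with orders `1 ≤ k₁ < ⋯ < kₙ`) is nonzero, then the set of
`ε ∈ [0, ε₀]` such that `1, γ₁(ε), …, γₙ(ε)` are `ℚ`-linearly independent is dense in
`[0, ε₀]`. -/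
theorem lissajous_stmt2 (n : ℕ) (ε₀ : ℝ) (hε₀ : 0 < ε₀) (γ : ℝ → Fin n → ℝ)
    (hanal : ∀ i : Fin n, AnalyticOnNhd ℝ (fun ε => γ ε i) (Set.Icc 0 ε₀))
    (k : Fin n → ℕ) (hk1 : ∀ j, 1 ≤ k j) (hkmono : StrictMono k)
    (hdet : (Matrix.of fun i j : Fin n => iteratedDeriv (k j) (fun ε => γ ε i) 0).det ≠ 0) :
    Set.Icc (0:ℝ) ε₀ ⊆ closure {ε | ε ∈ Set.Icc (0:ℝ) ε₀ ∧
      ∀ (q : Fin n → ℚ) (q0 : ℚ), (∑ i, (q i : ℝ) * γ ε i) + (q0 : ℝ) = 0 →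
        (∀ i, q i = 0) ∧ q0 = 0} := by
  classical
  have h0S : (0:ℝ) ∈ Set.Icc (0:ℝ) ε₀ := ⟨le_refl 0, hε₀.le⟩
  -- Key countability claim for each nonzero rational coefficient vector.
  have key : ∀ (q : Fin n → ℚ) (q0 : ℚ), ((¬ ∀ i, q i = 0) ∨ q0 ≠ 0) →
      {ε | ε ∈ Set.Icc (0:ℝ) ε₀ ∧ (∑ i, (q i : ℝ) * γ ε i) + (q0:ℝ) = 0}.Countable := by
    intro q q0 hq
    have hfa : AnalyticOnNhd ℝ (fun ε => (∑ i, (q i : ℝ) * γ ε i) + (q0:ℝ))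
        (Set.Icc 0 ε₀) := by
      rw [show (fun ε => (∑ i, (q i : ℝ) * γ ε i) + (q0:ℝ)) = (∑ i, fun ε => (q i : ℝ) * γ ε i)
          + fun _ => (q0:ℝ) from by funext ε; simp [Finset.sum_apply]]
      exact (Finset.analyticOnNhd_sum (f := fun i ε => (q i : ℝ) * γ ε i) Finset.univ fun i _ =>
        analyticOnNhd_const.mul (hanal i)).add (analyticOnNhd_const (v := (q0:ℝ)))
    refine countable_zeros hfa isPreconnected_Icc ?_
    intro hEq
    by_cases hq1 : ∀ i, q i = 0
    · have hq0 : q0 ≠ 0 := hq.resolve_left (not_not_intro hq1)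
      have h0 : (∑ i, (q i : ℝ) * γ 0 i) + (q0:ℝ) = 0 := hEq h0S
      simp only [hq1, Rat.cast_zero, zero_mul, Finset.sum_const_zero, zero_add] at h0
      exact hq0 (by exact_mod_cast h0)
    · -- derivative argument
      -- all iterated derivatives of f at 0 vanish
      have hfreq : ∃ᶠ z in 𝓝[≠] (0:ℝ),
          (∑ i, (q i : ℝ) * γ z i) + (q0:ℝ) = 0 := by
        have h1 : ∀ᶠ z in 𝓝[>] (0:ℝ), (∑ i, (q i : ℝ) * γ z i) + (q0:ℝ) = 0 := by
          filter_upwards [Ioo_mem_nhdsGT_of_mem (Set.left_mem_Ico.2 hε₀)] with z hz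
          exact hEq ⟨hz.1.le, hz.2.le⟩
        exact h1.frequently.filter_mono
          (nhdsWithin_mono 0 fun z hz => Set.mem_compl_singleton_iff.2 (ne_of_gt hz))
      have hev : (fun z => (∑ i, (q i : ℝ) * γ z i) + (q0:ℝ)) =ᶠ[𝓝 (0:ℝ)] 0 :=
        (hfa 0 h0S).frequently_zero_iff_eventually_zero.1 hfreq
      have hder0 : ∀ m : ℕ,
          iteratedDeriv m (fun z => (∑ i, (q i : ℝ) * γ z i) + (q0:ℝ)) 0 = 0 := by
        intro m
        rw [hev.iteratedDeriv_eq m, iteratedDeriv_eq_iteratedFDeriv]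
        have : (iteratedFDeriv ℝ m fun _ : ℝ => (0:ℝ)) = 0 := iteratedFDeriv_zero_fun
        simp only [Pi.zero_def] at this ⊢
        rw [this]
        simp
      -- compute iterated derivatives of f at 0 via an open neighborhood
      obtain ⟨u, hu_sub, hu_open, hu0⟩ := mem_nhds_iff.mp
        ((Filter.eventually_all.2 fun i =>
          (hanal i 0 h0S).eventually_analyticAt) : ∀ᶠ y in 𝓝 (0:ℝ), ∀ i,
            AnalyticAt ℝ (fun ε => γ ε i) y)
      have hud : UniqueDiffOn ℝ u := hu_open.uniqueDiffOn
      have hcd : ∀ (i : Fin n) (m : ℕ), ContDiffOn ℝ m (fun ε => γ ε i) u := fun i m =>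
        AnalyticOnNhd.contDiffOn (fun y hy => hu_sub hy i) hud
      have hcalc : ∀ m : ℕ, 0 < m →
          iteratedDeriv m (fun z => (∑ i, (q i : ℝ) * γ z i) + (q0:ℝ)) 0
            = ∑ i, (q i : ℝ) * iteratedDeriv m (fun ε => γ ε i) 0 := by
        intro m hm
        rw [← iteratedDerivWithin_of_isOpen' m hu_open hu0]
        have he : (fun z => (∑ i, (q i : ℝ) * γ z i) + (q0:ℝ))
            = (fun z => (q0:ℝ) + ∑ i, (q i : ℝ) * γ z i) := by
          funext z; ring
        rw [he, iteratedDerivWithin_const_add hm,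
          iteratedDerivWithin_fun_sum' Finset.univ (fun i z => (q i : ℝ) * γ z i) hu0 hud
            (fun i => contDiffOn_const.mul (hcd i m))]
        refine Finset.sum_congr rfl fun i _ => ?_
        rw [iteratedDerivWithin_const_mul hu0 hud _ (hcd i m 0 hu0),
          iteratedDerivWithin_of_isOpen' m hu_open hu0]
      -- linear algebra contradiction
      set M : Matrix (Fin n) (Fin n) ℝ :=
        Matrix.of fun i j : Fin n => iteratedDeriv (k j) (fun ε => γ ε i) 0 with hM
      set qR : Fin n → ℝ := fun i => (q i : ℝ) with hqR
      have hvec : qR ᵥ* M = 0 := by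
        funext j
        have := (hcalc (k j) (hk1 j)).symm.trans (hder0 (k j))
        simpa [Matrix.vecMul, dotProduct, hM, hqR] using this
      have hunit : IsUnit M.det := isUnit_iff_ne_zero.mpr hdet
      have hq0' : qR = 0 := by
        have h1 : qR ᵥ* (M * M⁻¹) = 0 := by
          rw [← Matrix.vecMul_vecMul, hvec, Matrix.zero_vecMul]
        rwa [Matrix.mul_nonsing_inv _ hunit, Matrix.vecMul_one] at h1
      refine hq1 fun i => ?_
      have h2 : ((q i : ℝ)) = 0 := congrFun hq0' i
      exact_mod_cast h2
  -- The bad set is countable.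
  set Bad : Set ℝ := ⋃ p : (Fin n → ℚ) × ℚ,
    {ε | ε ∈ Set.Icc (0:ℝ) ε₀ ∧ ((¬ ∀ i, p.1 i = 0) ∨ p.2 ≠ 0) ∧
      (∑ i, (p.1 i : ℝ) * γ ε i) + (p.2:ℝ) = 0} with hBadDef
  have hBad : Bad.Countable := by
    refine Set.countable_iUnion fun p => ?_
    by_cases hp : (¬ ∀ i, p.1 i = 0) ∨ p.2 ≠ 0
    · refine Set.Countable.mono ?_ (key p.1 p.2 hp)
      intro ε hε
      exact ⟨hε.1, hε.2.2⟩
    · convert Set.countable_empty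
      ext ε
      simp only [Set.mem_setOf_eq, Set.mem_empty_iff_false, iff_false]
      rintro ⟨-, hc, -⟩
      exact hp hc
  -- Density.
  intro x hx
  rw [mem_closure_iff]
  intro U hU hxU
  obtain ⟨δ, hδ, hball⟩ := Metric.isOpen_iff.mp hU x hxU
  set a : ℝ := max 0 (x - δ/2) with ha
  set b : ℝ := min ε₀ (x + δ/2) with hb
  have hab : a < b := by
    rw [ha, hb]
    apply max_lt <;> [skip; skip] <;> apply lt_min
    · exact hε₀
    · linarith [hx.1, hδ]
    · linarith [hx.2, hδ]
    · linarith [hδ]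
  have hIoo_unc : ¬ (Set.Ioo a b).Countable := by
    intro hc
    have h1 := hc.le_aleph0
    rw [Cardinal.mk_Ioo_real hab] at h1
    exact absurd h1 (not_le.mpr Cardinal.aleph0_lt_continuum)
  have hnsub : ¬ Set.Ioo a b ⊆ Bad := fun h => hIoo_unc (hBad.mono h)
  obtain ⟨y, hy, hyB⟩ := Set.not_subset.mp hnsub
  have hyS : y ∈ Set.Icc (0:ℝ) ε₀ :=
    ⟨(le_max_left 0 _).trans hy.1.le, hy.2.le.trans (min_le_left _ _)⟩
  have hyU : y ∈ U := by
    apply hball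
    rw [Metric.mem_ball, Real.dist_eq, abs_sub_lt_iff]
    constructor
    · have : y < x + δ/2 := lt_of_lt_of_le hy.2 (min_le_right _ _)
      linarith
    · have : x - δ/2 < y := lt_of_le_of_lt (le_max_right 0 _) hy.1
      linarith
  refine ⟨y, hyU, hyS, fun q q0 hrel => ?_⟩
  by_contra hcon
  apply hyB
  rw [hBadDef]
  refine Set.mem_iUnion.2 ⟨(q, q0), hyS, ?_, hrel⟩
  by_cases h1 : ∀ i, q i = 0
  · exact Or.inr fun h2 => hcon ⟨h1, h2⟩
  · exact Or.inl h1
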